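/- Let K be a field of characteristic zero and let A be a finite-dimensional non-unital associative K-algebra. Then for every non-unital associative K-algebra B there exists a universal pair for (A, B): a commutative K-algebra C₀ together with a non-unital algebra homomorphism η : B → A ⊗ C₀ such that for every commutative K-algebra C and every non-unital algebra homomorphism f : B → A ⊗ C there exists a unique K-algebra homomorphism Φ : C₀ → C with f = (id_A ⊗ Φ) ∘ η. (Equivalently, the functor A ⊗ − : ComAlg_K → Alg_K admits a left adjoint.) -/

import Mathlib

/-!
Statement 12: Let `K` be a field of characteristic zero and `A` a finite-dimensional
non-unital associative `K`-algebra. Then every non-unital associative `K`-algebra `B` admits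
a universal pair for `(A, B)`: a commutative `K`-algebra `C₀` with a non-unital algebra
homomorphism `η : B → A ⊗ C₀` such that every non-unital algebra homomorphism
`f : B → A ⊗ C` (with `C` a commutative `K`-algebra) factors as `f = (id_A ⊗ Φ) ∘ η` for a
unique `K`-algebra homomorphism `Φ : C₀ → C`.
-/

open TensorProduct

universe u

/-- `(C₀, η)` is a universal pair for `(A, B)`: for every commutative `K`-algebra `C` and
every non-unital algebra homomorphism `f : B → A ⊗ C` there is a unique `K`-algebra
homomorphism `Φ : C₀ → C` with `f = (id_A ⊗ Φ) ∘ η`. -/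
def IsUniversalAlgPair (K : Type u) [Field K]
    (A : Type u) [NonUnitalRing A] [Module K A] [SMulCommClass K A A] [IsScalarTower K A A]
    (B : Type u) [NonUnitalRing B] [Module K B] [SMulCommClass K B B] [IsScalarTower K B B]
    (C₀ : Type u) [CommRing C₀] [Algebra K C₀]
    (η : B →ₙₐ[K] A ⊗[K] C₀) : Prop :=
  ∀ (C : Type u) [CommRing C] [Algebra K C], ∀ f : B →ₙₐ[K] A ⊗[K] C,
    ∃! Φ : C₀ →ₐ[K] C, ∀ x : B, f x = LinearMap.lTensor A Φ.toLinearMap (η x)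

/-- A universal pair for `(A, B)`: a commutative `K`-algebra `C₀` together with a non-unital
algebra homomorphism `η : B → A ⊗ C₀` satisfying the universal property. -/
structure UniversalAlgPair (K : Type u) [Field K]
    (A : Type u) [NonUnitalRing A] [Module K A] [SMulCommClass K A A] [IsScalarTower K A A]
    (B : Type u) [NonUnitalRing B] [Module K B] [SMulCommClass K B B] [IsScalarTower K B B] :
    Type (u + 1) where
  C₀ : Type u
  [commRingC₀ : CommRing C₀]
  [algebraC₀ : Algebra K C₀]
  η : B →ₙₐ[K] A ⊗[K] C₀
  universal : IsUniversalAlgPair K A B C₀ η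

set_option linter.unusedSectionVars false

namespace UAPProof

variable {K : Type u} [Field K]
variable {A : Type u} [NonUnitalRing A] [Module K A] [SMulCommClass K A A] [IsScalarTower K A A]
variable {ι : Type u} [Fintype ι] (b : Module.Basis ι K A)
variable {R : Type u} [CommRing R] [Algebra K R]

noncomputable def coordT (i : ι) : A ⊗[K] R →ₗ[K] R :=
  (TensorProduct.lid K R).toLinearMap ∘ₗ LinearMap.rTensor R (b.coord i)

lemma coordT_tmul (i : ι) (a : A) (r : R) : coordT b i (a ⊗ₜ[K] r) = b.repr a i • r := by
  simp [coordT, Module.Basis.coord_apply]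

lemma sum_coordT (x : A ⊗[K] R) : ∑ i, b i ⊗ₜ[K] coordT b i x = x := by
  induction x using TensorProduct.induction_on with
  | zero => simp
  | tmul a r =>
    calc ∑ i, b i ⊗ₜ[K] coordT b i (a ⊗ₜ[K] r)
        = ∑ i, (b.repr a i • b i) ⊗ₜ[K] r := by
          simp [coordT_tmul, TensorProduct.tmul_smul, TensorProduct.smul_tmul']
      _ = (∑ i, b.repr a i • b i) ⊗ₜ[K] r := by rw [TensorProduct.sum_tmul]
      _ = a ⊗ₜ[K] r := by rw [Module.Basis.sum_repr]
  | add x y hx hy =>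
    simp only [map_add, TensorProduct.tmul_add, Finset.sum_add_distrib, hx, hy]

lemma coordT_lTensor {C : Type u} [CommRing C] [Algebra K C]
    (φ : R →ₗ[K] C) (i : ι) (x : A ⊗[K] R) :
    coordT b i (LinearMap.lTensor A φ x) = φ (coordT b i x) := by
  induction x using TensorProduct.induction_on with
  | zero => simp
  | tmul a r => simp [coordT_tmul, map_smul]
  | add x y hx hy => simp [map_add, hx, hy]

lemma coordT_sum_tmul (c : ι → R) (i : ι) [DecidableEq ι] :
    coordT b i (∑ j, b j ⊗ₜ[K] c j) = c i := by
  rw [map_sum]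
  simp only [coordT_tmul, Module.Basis.repr_self, Finsupp.single_apply]
  simp [ite_smul]

lemma lTensor_mul {C : Type u} [CommRing C] [Algebra K C]
    (φ : R →ₐ[K] C) (x y : A ⊗[K] R) :
    LinearMap.lTensor A φ.toLinearMap (x * y) =
      LinearMap.lTensor A φ.toLinearMap x * LinearMap.lTensor A φ.toLinearMap y := by
  induction x using TensorProduct.induction_on with
  | zero => simp
  | tmul a r =>
    induction y using TensorProduct.induction_on with
    | zero => simp
    | tmul a' r' => simp
    | add y₁ y₂ h₁ h₂ => simp only [mul_add, map_add, h₁, h₂]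
  | add x₁ x₂ h₁ h₂ => simp only [add_mul, map_add, h₁, h₂]

section Main

variable (K A)
variable [FiniteDimensional K A]
variable (B : Type u) [NonUnitalRing B] [Module K B] [SMulCommClass K B B] [IsScalarTower K B B]

/-- index set -/
abbrev Idx : Type u := ULift.{u} (Fin (Module.finrank K A))

noncomputable def bA : Module.Basis (Idx K A) K A :=
  (Module.finBasis K A).reindex (Equiv.ulift.symm)

/-- the free commutative algebra -/
abbrev Rp : Type u := MvPolynomial (B × Idx K A) K

noncomputable def eta0 (x : B) : A ⊗[K] Rp K A B :=
  ∑ i, bA K A i ⊗ₜ[K] MvPolynomial.X (x, i)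

noncomputable def relIdeal : Ideal (Rp K A B) := Ideal.span
  ({p | ∃ x y i, p = MvPolynomial.X (x + y, i) - MvPolynomial.X (x, i) - MvPolynomial.X (y, i)} ∪
   {p | ∃ (k : K) (x : B) (i : Idx K A),
      p = MvPolynomial.X (k • x, i) - MvPolynomial.C k * MvPolynomial.X (x, i)} ∪
   {p | ∃ x y i, p = MvPolynomial.X (x * y, i) -
      coordT (bA K A) i (eta0 K A B x * eta0 K A B y)})

noncomputable def piQ : Rp K A B →ₐ[K] Rp K A B ⧸ relIdeal K A B :=
  Ideal.Quotient.mkₐ K (relIdeal K A B)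

lemma piQ_rel {p : Rp K A B} (hp : p ∈
    ({p | ∃ x y i, p = MvPolynomial.X (x + y, i) - MvPolynomial.X (x, i) - MvPolynomial.X (y, i)} ∪
     {p | ∃ (k : K) (x : B) (i : Idx K A),
        p = MvPolynomial.X (k • x, i) - MvPolynomial.C k * MvPolynomial.X (x, i)} ∪
     {p | ∃ x y i, p = MvPolynomial.X (x * y, i) -
        coordT (bA K A) i (eta0 K A B x * eta0 K A B y)} : Set (Rp K A B))) :
    piQ K A B p = 0 := by
  have : p ∈ relIdeal K A B := Ideal.subset_span hp
  exact (Ideal.Quotient.eq_zero_iff_mem).2 this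

lemma piQ_add (x y : B) (i : Idx K A) :
    piQ K A B (MvPolynomial.X (x + y, i)) =
      piQ K A B (MvPolynomial.X (x, i)) + piQ K A B (MvPolynomial.X (y, i)) := by
  have := piQ_rel K A B (Or.inl (Or.inl ⟨x, y, i, rfl⟩))
  rw [map_sub, map_sub, sub_sub, sub_eq_zero] at this
  simpa using this

lemma piQ_smul (k : K) (x : B) (i : Idx K A) :
    piQ K A B (MvPolynomial.X (k • x, i)) = k • piQ K A B (MvPolynomial.X (x, i)) := by
  have := piQ_rel K A B (Or.inl (Or.inr ⟨k, x, i, rfl⟩))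
  rw [map_sub, sub_eq_zero] at this
  rw [this, map_mul]
  rw [show (MvPolynomial.C k : Rp K A B) = algebraMap K (Rp K A B) k from rfl,
    AlgHom.commutes, ← Algebra.smul_def]

lemma piQ_mul (x y : B) (i : Idx K A) :
    piQ K A B (MvPolynomial.X (x * y, i)) =
      piQ K A B (coordT (bA K A) i (eta0 K A B x * eta0 K A B y)) := by
  have := piQ_rel K A B (Or.inr ⟨x, y, i, rfl⟩)
  rw [map_sub, sub_eq_zero] at this
  exact this

lemma lTensor_eta0 {C : Type u} [CommRing C] [Algebra K C] (φ : Rp K A B →ₐ[K] C) (x : B) :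
    LinearMap.lTensor A φ.toLinearMap (eta0 K A B x) =
      ∑ i, bA K A i ⊗ₜ[K] φ (MvPolynomial.X (x, i)) := by
  rw [eta0, map_sum]
  simp

noncomputable def etaMap : B →ₙₐ[K] A ⊗[K] (Rp K A B ⧸ relIdeal K A B) where
  toFun x := ∑ i, bA K A i ⊗ₜ[K] piQ K A B (MvPolynomial.X (x, i))
  map_add' x y := by
    simp only [piQ_add, TensorProduct.tmul_add, Finset.sum_add_distrib]
  map_smul' k x := by
    simp only [piQ_smul, TensorProduct.tmul_smul, Finset.smul_sum, MonoidHom.id_apply]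
  map_zero' := by
    have h0 : ∀ i : Idx K A, piQ K A B (MvPolynomial.X ((0 : B), i)) = 0 := by
      intro i
      have := piQ_smul K A B 0 0 i
      rw [zero_smul, zero_smul] at this
      exact this
    simp [h0]
  map_mul' x y := by
    have key : eta0 K A B x * eta0 K A B y =
        ∑ i, bA K A i ⊗ₜ[K] coordT (bA K A) i (eta0 K A B x * eta0 K A B y) :=
      (sum_coordT (bA K A) _).symm
    calc ∑ i, bA K A i ⊗ₜ[K] piQ K A B (MvPolynomial.X (x * y, i))
        = ∑ i, bA K A i ⊗ₜ[K] piQ K A B (coordT (bA K A) i (eta0 K A B x * eta0 K A B y)) := by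
          simp only [piQ_mul]
      _ = LinearMap.lTensor A (piQ K A B).toLinearMap (eta0 K A B x * eta0 K A B y) := by
          conv_rhs => rw [key]
          rw [map_sum]; simp
      _ = LinearMap.lTensor A (piQ K A B).toLinearMap (eta0 K A B x) *
            LinearMap.lTensor A (piQ K A B).toLinearMap (eta0 K A B y) :=
          lTensor_mul _ _ _
      _ = (∑ i, bA K A i ⊗ₜ[K] piQ K A B (MvPolynomial.X (x, i))) *
            (∑ i, bA K A i ⊗ₜ[K] piQ K A B (MvPolynomial.X (y, i))) := by
          rw [lTensor_eta0, lTensor_eta0]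

lemma etaMap_apply (x : B) :
    etaMap K A B x = ∑ i, bA K A i ⊗ₜ[K] piQ K A B (MvPolynomial.X (x, i)) := rfl

section Univ

variable {C : Type u} [CommRing C] [Algebra K C]

noncomputable def phi0 (f : B →ₙₐ[K] A ⊗[K] C) : Rp K A B →ₐ[K] C :=
  MvPolynomial.aeval (fun p : B × Idx K A => coordT (bA K A) p.2 (f p.1))

lemma phi0_X (f : B →ₙₐ[K] A ⊗[K] C) (x : B) (i : Idx K A) :
    phi0 K A B f (MvPolynomial.X (x, i)) = coordT (bA K A) i (f x) := by
  simp [phi0]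

lemma lTensor_phi0_eta0 (f : B →ₙₐ[K] A ⊗[K] C) (x : B) :
    LinearMap.lTensor A (phi0 K A B f).toLinearMap (eta0 K A B x) = f x := by
  rw [lTensor_eta0]
  simp only [phi0_X]
  exact sum_coordT (bA K A) (f x)

lemma phi0_rel (f : B →ₙₐ[K] A ⊗[K] C) : ∀ a ∈ relIdeal K A B, phi0 K A B f a = 0 := by
  have hle : relIdeal K A B ≤ RingHom.ker (phi0 K A B f).toRingHom := by
    rw [relIdeal]
    refine Ideal.span_le.2 ?_
    rintro p ((⟨x, y, i, rfl⟩ | ⟨k, x, i, rfl⟩) | ⟨x, y, i, rfl⟩) <;>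
      rw [SetLike.mem_coe, RingHom.mem_ker]
    · show phi0 K A B f _ = 0
      rw [map_sub, map_sub, phi0_X, phi0_X, phi0_X, map_add f, map_add (coordT (bA K A) i)]
      abel
    · show phi0 K A B f _ = 0
      rw [map_sub, map_mul, phi0_X, phi0_X, map_smul f, map_smul (coordT (bA K A) i),
        show (phi0 K A B f) (MvPolynomial.C k) = algebraMap K C k by
          simp [phi0],
        ← Algebra.smul_def, sub_self]
    · show phi0 K A B f _ = 0
      rw [map_sub, phi0_X, map_mul f,
        show (phi0 K A B f) (coordT (bA K A) i (eta0 K A B x * eta0 K A B y)) =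
            coordT (bA K A) i (f x * f y) by
          rw [← lTensor_phi0_eta0 K A B f x, ← lTensor_phi0_eta0 K A B f y, ← lTensor_mul,
            coordT_lTensor, AlgHom.toLinearMap_apply],
        sub_self]
  intro a ha
  exact RingHom.mem_ker.mp (hle ha)

noncomputable def PhiMap (f : B →ₙₐ[K] A ⊗[K] C) : (Rp K A B ⧸ relIdeal K A B) →ₐ[K] C :=
  Ideal.Quotient.liftₐ (relIdeal K A B) (phi0 K A B f) (phi0_rel K A B f)

lemma PhiMap_piQ (f : B →ₙₐ[K] A ⊗[K] C) (p : Rp K A B) :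
    PhiMap K A B f (piQ K A B p) = phi0 K A B f p :=
  AlgHom.congr_fun (Ideal.Quotient.liftₐ_comp (relIdeal K A B) (phi0 K A B f)
    (phi0_rel K A B f)) p

lemma PhiMap_fact (f : B →ₙₐ[K] A ⊗[K] C) (x : B) :
    f x = LinearMap.lTensor A (PhiMap K A B f).toLinearMap (etaMap K A B x) := by
  rw [etaMap_apply, map_sum]
  simp only [LinearMap.lTensor_tmul, AlgHom.toLinearMap_apply, PhiMap_piQ, phi0_X]
  exact (sum_coordT (bA K A) (f x)).symm

lemma PhiMap_unique (f : B →ₙₐ[K] A ⊗[K] C)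
    (Ψ : (Rp K A B ⧸ relIdeal K A B) →ₐ[K] C)
    (h : ∀ x : B, f x = LinearMap.lTensor A Ψ.toLinearMap (etaMap K A B x)) :
    Ψ = PhiMap K A B f := by
  apply Ideal.Quotient.algHom_ext
  apply MvPolynomial.algHom_ext
  rintro ⟨x, i⟩
  show Ψ (piQ K A B (MvPolynomial.X (x, i))) = PhiMap K A B f (piQ K A B (MvPolynomial.X (x, i)))
  have hx := h x
  rw [etaMap_apply, map_sum] at hx
  simp only [LinearMap.lTensor_tmul, AlgHom.toLinearMap_apply] at hx
  have hc := congrArg (coordT (bA K A) i) hx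
  rw [coordT_sum_tmul] at hc
  rw [PhiMap_piQ, phi0_X, ← hc]

end Univ

end Main

end UAPProof

/-- If `A` is a finite-dimensional non-unital associative algebra over a field `K` of
characteristic zero, then for every non-unital associative `K`-algebra `B` there exists a
universal pair for `(A, B)`. -/
theorem exists_universalAlgPair_of_finiteDimensional
    (K : Type u) [Field K] [CharZero K]
    (A : Type u) [NonUnitalRing A] [Module K A] [SMulCommClass K A A] [IsScalarTower K A A]
    [FiniteDimensional K A]
    (B : Type u) [NonUnitalRing B] [Module K B] [SMulCommClass K B B] [IsScalarTower K B B] :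
    Nonempty (UniversalAlgPair K A B) :=
  ⟨UniversalAlgPair.mk (UAPProof.Rp K A B ⧸ UAPProof.relIdeal K A B) (UAPProof.etaMap K A B)
    (fun C _ _ f => ⟨UAPProof.PhiMap K A B f, UAPProof.PhiMap_fact K A B f,
      fun Ψ hΨ => UAPProof.PhiMap_unique K A B f Ψ hΨ⟩)⟩
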